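/- If X is a di-exact z-exact category, then dinversion preserves normal maps in the category ses(X) of short exact sequences of X: for every object S of ses(X) and all normal monomorphisms m : T ↣ S and μ : U ↣ S in ses(X), the composite T ↣ S ↠ S/U is a normal morphism if and only if the composite U ↣ S ↠ S/T is a normal morphism. -/

import Mathlib

open CategoryTheory CategoryTheory.Limits

universe v u

variable {C : Type u} [Category.{v} C]

/-- A morphism is a *normal monomorphism* if it is a kernel of some morphism. -/
def IsNormalMonoMap [HasZeroMorphisms C] {X Y : C} (f : X ⟶ Y) : Prop :=
  Nonempty (NormalMono f)

/-- A morphism is a *normal epimorphism* if it is a cokernel of some morphism. -/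
def IsNormalEpiMap [HasZeroMorphisms C] {X Y : C} (f : X ⟶ Y) : Prop :=
  Nonempty (NormalEpi f)

/-- A morphism is *normal* if it factors as a normal epimorphism followed by a
normal monomorphism. -/
def IsNormalMap [HasZeroMorphisms C] {X Y : C} (f : X ⟶ Y) : Prop :=
  ∃ (I : C) (e : X ⟶ I) (m : I ⟶ Y), IsNormalEpiMap e ∧ IsNormalMonoMap m ∧ e ≫ m = f

/-- A morphism is *antinormal* if it factors as a normal monomorphism followed by a
normal epimorphism. -/
def IsAntinormalMap [HasZeroMorphisms C] {X Y : C} (f : X ⟶ Y) : Prop :=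
  ∃ (I : C) (m : X ⟶ I) (e : I ⟶ Y), IsNormalMonoMap m ∧ IsNormalEpiMap e ∧ m ≫ e = f

variable (C) in
/-- A z-exact category is *di-exact* if every antinormal morphism is normal. -/
def IsDiExact [HasZeroMorphisms C] : Prop :=
  ∀ ⦃X Y : C⦄ (f : X ⟶ Y), IsAntinormalMap f → IsNormalMap f

variable (C) in
/-- A z-exact category is *homologically self-dual* if for every totally normal sequence of
monomorphisms `f : X ⟶ Y`, `g : Y ⟶ Z`, the induced morphism `Y/X ⟶ Z/X` between the
cokernels is a normal monomorphism. -/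
def IsHomologicallySelfDual [HasZeroMorphisms C] : Prop :=
  ∀ ⦃X Y Z QY QZ : C⦄ (f : X ⟶ Y) (g : Y ⟶ Z),
    IsNormalMonoMap f → IsNormalMonoMap g → IsNormalMonoMap (f ≫ g) →
    ∀ (p : Y ⟶ QY) (wp : f ≫ p = 0), IsColimit (CokernelCofork.ofπ p wp) →
    ∀ (q : Z ⟶ QZ) (wq : (f ≫ g) ≫ q = 0), IsColimit (CokernelCofork.ofπ q wq) →
    ∀ (u : QY ⟶ QZ), p ≫ u = g ≫ q → IsNormalMonoMap u

/-- The poset of normal subobjects of an object. -/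
abbrev NormalSubobject [HasZeroMorphisms C] (A : C) : Type (max u v) :=
  {P : Subobject A // Nonempty (NormalMono P.arrow)}

/-- Modularity of the poset of normal subobjects, expressed via `IsLUB`/`IsGLB`. -/
def NormalSubobjectsModular [HasZeroMorphisms C] (A : C) : Prop :=
  ∀ P Q R S T U V : NormalSubobject A, R ≤ P →
    IsLUB {Q, R} S → IsGLB {P, S} T → IsGLB {P, Q} U → IsLUB {U, R} V → T = V

/-- Distributivity of the poset of normal subobjects, expressed via `IsLUB`/`IsGLB`. -/
def NormalSubobjectsDistrib [HasZeroMorphisms C] (A : C) : Prop :=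
  ∀ P Q R S T U V W : NormalSubobject A,
    IsLUB {Q, R} S → IsGLB {P, S} T → IsGLB {P, Q} U → IsGLB {P, R} V →
    IsLUB {U, V} W → T = W


/-- A short exact sequence in a pointed category: `f` is a kernel of `g` and
`g` is a cokernel of `f`. -/
structure SES (C : Type u) [Category.{v} C] [HasZeroMorphisms C] : Type (max u v) where
  X : C
  Y : C
  Z : C
  f : X ⟶ Y
  g : Y ⟶ Z
  w : f ≫ g = 0
  isKernel : Nonempty (IsLimit (KernelFork.ofι f w))
  isCokernel : Nonempty (IsColimit (CokernelCofork.ofπ g w))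

namespace SES

variable {C : Type u} [Category.{v} C] [HasZeroMorphisms C]

/-- Morphisms of short exact sequences: componentwise commuting triples. -/
@[ext] structure Hom (S T : SES C) : Type v where
  a : S.X ⟶ T.X
  b : S.Y ⟶ T.Y
  c : S.Z ⟶ T.Z
  comm₁ : S.f ≫ b = a ≫ T.f
  comm₂ : S.g ≫ c = b ≫ T.g

instance : Category (SES C) where
  Hom := Hom
  id S := ⟨𝟙 _, 𝟙 _, 𝟙 _, by simp, by simp⟩
  comp u v := ⟨u.a ≫ v.a, u.b ≫ v.b, u.c ≫ v.c,
    by rw [← Category.assoc, u.comm₁, Category.assoc, v.comm₁, ← Category.assoc],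
    by rw [← Category.assoc, u.comm₂, Category.assoc, v.comm₂, ← Category.assoc]⟩
  id_comp u := by apply Hom.ext <;> simp [CategoryStruct.id, CategoryStruct.comp]
  comp_id u := by apply Hom.ext <;> simp [CategoryStruct.id, CategoryStruct.comp]
  assoc u v w := by apply Hom.ext <;> simp [CategoryStruct.comp]

instance : HasZeroMorphisms (SES C) where
  zero S T := ⟨⟨0, 0, 0, by simp, by simp⟩⟩
  comp_zero u T := by apply Hom.ext <;> exact comp_zero
  zero_comp S {T U} u := by apply Hom.ext <;> exact zero_comp

end SES

namespace St16

open CategoryTheory CategoryTheory.Limits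

section Basics

variable {D : Type*} [Category D] [HasZeroMorphisms D]

/-- Elementary kernel predicate. -/
structure IsKer {K A B : D} (k : K ⟶ A) (f : A ⟶ B) : Prop where
  w : k ≫ f = 0
  mono : Mono k
  lift : ∀ ⦃P : D⦄ (t : P ⟶ A), t ≫ f = 0 → ∃ s : P ⟶ K, s ≫ k = t

/-- Elementary cokernel predicate. -/
structure IsCoker {A B Q : D} (q : B ⟶ Q) (f : A ⟶ B) : Prop where
  w : f ≫ q = 0
  epi : Epi q
  desc : ∀ ⦃P : D⦄ (t : B ⟶ P), f ≫ t = 0 → ∃ s : Q ⟶ P, q ≫ s = t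

/-- Joint cokernel of a pair of morphisms. -/
structure IsCokerPair {A₁ A₂ B Q : D} (q : B ⟶ Q) (f₁ : A₁ ⟶ B) (f₂ : A₂ ⟶ B) : Prop where
  w₁ : f₁ ≫ q = 0
  w₂ : f₂ ≫ q = 0
  desc : ∀ ⦃P : D⦄ (t : B ⟶ P), f₁ ≫ t = 0 → f₂ ≫ t = 0 → ∃ s : Q ⟶ P, q ≫ s = t

theorem isKer_of_isLimit {K A B : D} {k : K ⟶ A} {f : A ⟶ B} {w : k ≫ f = 0}
    (h : IsLimit (KernelFork.ofι k w)) : IsKer k f := by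
  refine ⟨w, ⟨fun {P} u u' huu => ?_⟩, fun P t ht => ?_⟩
  · apply Fork.IsLimit.hom_ext h
    simpa using huu
  · obtain ⟨l, hl⟩ := KernelFork.IsLimit.lift' h t ht
    exact ⟨l, by simpa using hl⟩

theorem isCoker_of_isColimit {A B Q : D} {q : B ⟶ Q} {f : A ⟶ B} {w : f ≫ q = 0}
    (h : IsColimit (CokernelCofork.ofπ q w)) : IsCoker q f := by
  refine ⟨w, ⟨fun {P} u u' huu => ?_⟩, fun P t ht => ?_⟩
  · apply Cofork.IsColimit.hom_ext h
    simpa using huu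
  · obtain ⟨l, hl⟩ := CokernelCofork.IsColimit.desc' h t ht
    exact ⟨l, by simpa using hl⟩

noncomputable def IsKer.isLimit {K A B : D} {k : K ⟶ A} {f : A ⟶ B} (h : IsKer k f) :
    IsLimit (KernelFork.ofι k h.w) := by
  have := h.mono
  exact KernelFork.IsLimit.ofι' k h.w (fun {P} t ht =>
    ⟨(h.lift t ht).choose, (h.lift t ht).choose_spec⟩)

noncomputable def IsCoker.isColimit {A B Q : D} {q : B ⟶ Q} {f : A ⟶ B} (h : IsCoker q f) :
    IsColimit (CokernelCofork.ofπ q h.w) := by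
  have := h.epi
  exact CokernelCofork.IsColimit.ofπ' q h.w (fun {P} t ht =>
    ⟨(h.desc t ht).choose, (h.desc t ht).choose_spec⟩)

theorem IsKer.normalMono {K A B : D} {k : K ⟶ A} {f : A ⟶ B} (h : IsKer k f) :
    IsNormalMonoMap k := ⟨⟨B, f, h.w, h.isLimit⟩⟩

theorem IsCoker.normalEpi {A B Q : D} {q : B ⟶ Q} {f : A ⟶ B} (h : IsCoker q f) :
    IsNormalEpiMap q := ⟨⟨A, f, h.w, h.isColimit⟩⟩

theorem isKer_of_normalMono {A B : D} {k : A ⟶ B} (h : IsNormalMonoMap k) :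
    ∃ (W : D) (f : B ⟶ W), IsKer k f := by
  obtain ⟨n⟩ := h
  exact ⟨n.Z, n.g, isKer_of_isLimit n.isLimit⟩

theorem isCoker_of_normalEpi {A B : D} {q : A ⟶ B} (h : IsNormalEpiMap q) :
    ∃ (W : D) (f : W ⟶ A), IsCoker q f := by
  obtain ⟨n⟩ := h
  exact ⟨n.W, n.g, isCoker_of_isColimit n.isColimit⟩

theorem mono_of_normalMono {A B : D} {k : A ⟶ B} (h : IsNormalMonoMap k) : Mono k := by
  obtain ⟨_, _, hk⟩ := isKer_of_normalMono h; exact hk.mono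

/-- A normal mono is a kernel of any cokernel of itself. -/
theorem isKer_of_coker {K A Q : D} {k : K ⟶ A} {c : A ⟶ Q}
    (hk : IsNormalMonoMap k) (hc : IsCoker c k) : IsKer k c := by
  obtain ⟨W, f, hkf⟩ := isKer_of_normalMono hk
  refine ⟨hc.w, hkf.mono, fun P t ht => ?_⟩
  obtain ⟨h', hh'⟩ := hc.desc f hkf.w
  exact hkf.lift t (by rw [← hh', ← Category.assoc, ht, zero_comp])

/-- A cokernel is also a cokernel of any kernel of itself. -/
theorem isCoker_of_ker {A B Q K : D} {q : B ⟶ Q} {f : A ⟶ B} {k : K ⟶ B}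
    (hq : IsCoker q f) (hk : IsKer k q) : IsCoker q k := by
  refine ⟨hk.w, hq.epi, fun P t ht => ?_⟩
  obtain ⟨s, hs⟩ := hk.lift f hq.w
  exact hq.desc t (by rw [← hs, Category.assoc, ht, comp_zero])

/-- A normal mono is the kernel of its canonical cokernel quotient target. -/
theorem isKer_self_coker {K A B : D} {k : K ⟶ A} {f : A ⟶ B} {Q : D} {c : A ⟶ Q}
    (hk : IsKer k f) (hc : IsCoker c k) : IsKer k c :=
  isKer_of_coker hk.normalMono hc

theorem isCoker_epi_comp {A A' B Q : D} {q : B ⟶ Q} {e : A' ⟶ A} {f : A ⟶ B}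
    (h : IsCoker q (e ≫ f)) (he : Epi e) : IsCoker q f := by
  refine ⟨?_, h.epi, fun P t ht => h.desc t (by rw [Category.assoc, ht, comp_zero])⟩
  have := h.w
  rw [Category.assoc] at this
  exact he.left_cancellation _ _ (by simpa using this)

theorem isKer_comp_mono {K A B B' : D} {k : K ⟶ A} {f : A ⟶ B} {m : B ⟶ B'}
    (h : IsKer k (f ≫ m)) (hm : Mono m) : IsKer k f := by
  refine ⟨?_, h.mono, fun P t ht => h.lift t (by rw [← Category.assoc, ht, zero_comp])⟩
  have := h.w
  exact hm.right_cancellation _ _ (by simpa using this)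

theorem isCokerPair_comp {A₁ A₂ B Q R : D} {q : B ⟶ Q} {p : Q ⟶ R}
    {f₁ : A₁ ⟶ B} {f₂ : A₂ ⟶ B}
    (h₁ : IsCoker q f₂) (h₂ : IsCoker p (f₁ ≫ q)) : IsCokerPair (q ≫ p) f₁ f₂ := by
  refine ⟨by rw [← Category.assoc]; exact h₂.w,
    by rw [← Category.assoc, h₁.w, zero_comp], fun P t ht₁ ht₂ => ?_⟩
  obtain ⟨s₁, hs₁⟩ := h₁.desc t ht₂
  obtain ⟨s₂, hs₂⟩ := h₂.desc s₁ (by rw [Category.assoc, hs₁, ht₁])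
  exact ⟨s₂, by rw [Category.assoc, hs₂, hs₁]⟩

theorem IsCokerPair.symm {A₁ A₂ B Q : D} {q : B ⟶ Q} {f₁ : A₁ ⟶ B} {f₂ : A₂ ⟶ B}
    (h : IsCokerPair q f₁ f₂) : IsCokerPair q f₂ f₁ :=
  ⟨h.w₂, h.w₁, fun P t h₂ h₁ => h.desc t h₁ h₂⟩

theorem IsCokerPair.kill_transfer {A₁ A₂ B Q Q' P : D} {q : B ⟶ Q} {q' : B ⟶ Q'}
    {f₁ : A₁ ⟶ B} {f₂ : A₂ ⟶ B} (h : IsCokerPair q f₁ f₂) (h' : IsCokerPair q' f₁ f₂)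
    {t : P ⟶ B} (ht : t ≫ q = 0) : t ≫ q' = 0 := by
  obtain ⟨s, hs⟩ := h.desc q' h'.w₁ h'.w₂
  rw [← hs, ← Category.assoc, ht, zero_comp]

/-- A joint cokernel of a pair is a cokernel of its own kernel. -/
theorem isCoker_of_pair_ker {A₁ A₂ B Q K : D} {q : B ⟶ Q} {f₁ : A₁ ⟶ B} {f₂ : A₂ ⟶ B}
    {k : K ⟶ B} (h : IsCokerPair q f₁ f₂) (hq : Epi q) (hk : IsKer k q) : IsCoker q k := by
  refine ⟨hk.w, hq, fun P t ht => ?_⟩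
  obtain ⟨s₁, hs₁⟩ := hk.lift f₁ h.w₁
  obtain ⟨s₂, hs₂⟩ := hk.lift f₂ h.w₂
  exact h.desc t (by rw [← hs₁, Category.assoc, ht, comp_zero])
    (by rw [← hs₂, Category.assoc, ht, comp_zero])

end Basics

end St16

namespace St16

open CategoryTheory CategoryTheory.Limits

section Chosen

variable {D : Type*} [Category D] [HasZeroMorphisms D]

theorem isKer_kernelι [HasKernels D] {A B : D} (f : A ⟶ B) : IsKer (kernel.ι f) f :=
  ⟨kernel.condition f, inferInstance, fun _ t ht => ⟨kernel.lift f t ht, kernel.lift_ι f t ht⟩⟩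

theorem isCoker_cokernelπ [HasCokernels D] {A B : D} (f : A ⟶ B) :
    IsCoker (cokernel.π f) f :=
  ⟨cokernel.condition f, inferInstance,
    fun _ t ht => ⟨cokernel.desc f t ht, cokernel.π_desc f t ht⟩⟩

end Chosen

end St16

namespace St16

open CategoryTheory CategoryTheory.Limits

section IsoLem

variable {D : Type*} [Category D] [HasZeroMorphisms D]

/-- A normal mono which is epi is a (split) isomorphism. -/
theorem iso_of_ker_epi {A B W : D} {ψ : A ⟶ B} {δ : B ⟶ W}
    (hψ : IsKer ψ δ) (he : Epi ψ) : ∃ ψ' : B ⟶ A, ψ' ≫ ψ = 𝟙 B ∧ ψ ≫ ψ' = 𝟙 A := by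
  have hδ : δ = 0 := he.left_cancellation _ _ (by simpa using hψ.w)
  obtain ⟨s, hs⟩ := hψ.lift (𝟙 B) (by rw [hδ, comp_zero])
  refine ⟨s, hs, ?_⟩
  exact hψ.mono.right_cancellation _ _ (by rw [Category.assoc, hs, Category.comp_id,
    Category.id_comp])

end IsoLem

end St16
namespace St16

open CategoryTheory CategoryTheory.Limits

section Core

variable {D : Type*} [Category D] [HasZeroMorphisms D] [HasKernels D] [HasCokernels D]

/-- Di-exact factorization, normalized: the epi part is a cokernel of any given kernel
of the whole composite. -/
theorem fact (hdi : IsDiExact D) {A Y B' K : D} {u : A ⟶ Y} {w : Y ⟶ B'}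
    (hu : IsNormalMonoMap u) (hw : IsNormalEpiMap w) {k : K ⟶ A}
    (hk : IsKer k (u ≫ w)) :
    ∃ (I : D) (e : A ⟶ I) (m : I ⟶ B'),
      e ≫ m = u ≫ w ∧ IsNormalMonoMap m ∧ IsCoker e k := by
  obtain ⟨I, e, m, he, hm, hem⟩ := hdi (u ≫ w) ⟨_, u, w, hu, hw, rfl⟩
  obtain ⟨W₀, g₀, hg₀⟩ := isCoker_of_normalEpi he
  have hmono : Mono m := mono_of_normalMono hm
  have hker : IsKer k e := by
    refine ⟨?_, hk.mono, fun P t ht => hk.lift t (by rw [← hem, ← Category.assoc, ht, zero_comp])⟩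
    have h0 : (k ≫ e) ≫ m = 0 := by rw [Category.assoc, hem, hk.w]
    exact hmono.right_cancellation _ _ (by simpa using h0)
  exact ⟨I, e, m, hem, hm, isCoker_of_ker hg₀ hker⟩

/-- The key covering lemma: the epi part `η` of a di-exact factorization of `j ≫ p`
is a cokernel of `tK ≫ e`, where `tK` is a kernel of `w ≫ c₂ ≫ p`. -/
theorem mc (hdi : IsDiExact D) {W Y Q₂ R KΓ M : D}
    {w : W ⟶ Y} (hw : IsNormalMonoMap w)
    {c₂ : Y ⟶ Q₂} {p : Q₂ ⟶ R} (hγ : IsNormalEpiMap (c₂ ≫ p)) (hp : IsNormalEpiMap p)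
    {e : W ⟶ M} {j : M ⟶ Q₂} (hej : e ≫ j = w ≫ c₂) (hee : Epi e)
    (hjn : IsNormalMonoMap j)
    {tK : KΓ ⟶ W} (htK : IsKer tK (w ≫ c₂ ≫ p)) :
    ∃ (Eb : D) (η : M ⟶ Eb) (θ : Eb ⟶ R), η ≫ θ = j ≫ p ∧ Mono θ ∧ IsCoker η (tK ≫ e) := by
  obtain ⟨I, ε, κ, hεκ, hκn, hε⟩ := fact hdi hw hγ htK
  obtain ⟨Eb, η, θ, hηθ, hθn, hη0⟩ :=
    fact hdi hjn hp (isKer_kernelι (j ≫ p))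
  have hθm : Mono θ := mono_of_normalMono hθn
  have hΦ : e ≫ η ≫ θ = w ≫ c₂ ≫ p := by
    rw [hηθ, ← Category.assoc, hej, Category.assoc]
  -- tK ≫ e ≫ η = 0
  have h1 : (tK ≫ e) ≫ η = 0 := by
    have h0 : ((tK ≫ e) ≫ η) ≫ θ = 0 := by
      rw [Category.assoc, Category.assoc, hΦ, htK.w]
    exact hθm.right_cancellation _ _ (by simpa using h0)
  obtain ⟨ψ, hψ⟩ := hε.desc (e ≫ η) (by simpa using h1)
  have hψθ : ψ ≫ θ = κ := by
    refine hε.epi.left_cancellation _ _ ?_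
    rw [← Category.assoc, hψ, Category.assoc, hηθ, ← Category.assoc, hej,
      Category.assoc, hεκ]
  have hψepi : Epi ψ := by
    constructor
    intro Z' u u' huu
    have : e ≫ η ≫ u = e ≫ η ≫ u' := by
      rw [← Category.assoc, ← hψ, ← Category.assoc, ← hψ,
        Category.assoc, Category.assoc, huu]
    exact hη0.epi.left_cancellation _ _ (hee.left_cancellation _ _
      (by simpa [Category.assoc] using this))
  have hψm : Mono ψ := by
    constructor
    intro Z' u u' huu
    exact (mono_of_normalMono hκn).right_cancellation _ _ (by rw [← hψθ,
      ← Category.assoc, ← Category.assoc, huu])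
  -- ψ is a kernel of θ ≫ coker κ, hence normal mono; with epi it is iso
  have hcκ : IsCoker (cokernel.π κ) κ := isCoker_cokernelπ κ
  have hκker : IsKer κ (cokernel.π κ) := isKer_of_coker hκn hcκ
  have hψker : IsKer ψ (θ ≫ cokernel.π κ) := by
    refine ⟨by rw [← Category.assoc, hψθ, cokernel.condition], hψm, fun P t ht => ?_⟩
    obtain ⟨s, hs⟩ := hκker.lift (t ≫ θ) (by simpa [Category.assoc] using ht)
    refine ⟨s, hθm.right_cancellation _ _ ?_⟩
    rw [Category.assoc, hψθ, hs]
  obtain ⟨ψ', hψ'₁, hψ'₂⟩ := iso_of_ker_epi hψker hψepi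
  refine ⟨Eb, η, θ, hηθ, hθm, ⟨by simpa using h1, hη0.epi, fun P t ht => ?_⟩⟩
  obtain ⟨s, hs⟩ := hε.desc (e ≫ t) (by simpa [Category.assoc] using ht)
  refine ⟨ψ' ≫ s, hee.left_cancellation _ _ ?_⟩
  have hh : e ≫ η ≫ ψ' ≫ s = ε ≫ (ψ ≫ ψ') ≫ s := by
    rw [← Category.assoc, ← hψ]; simp [Category.assoc]
  rw [hh, hψ'₂, Category.id_comp, hs]

/-- Pullback step (Lemma A): from the exactness condition on the factorization
`e ≫ j = b ≫ c₂` one deduces the symmetric "K ≤ L" condition upstairs. -/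
theorem lemA {Y B A₁ A₂ B₁ B₂ Q₁ Q₂ R M : D}
    {b : B ⟶ Y} {a₁ : A₁ ⟶ Y} {a₂ : A₂ ⟶ Y}
    {c₁ : Y ⟶ Q₁} {c₂ : Y ⟶ Q₂} (hc₁ : IsCoker c₁ a₁) (hc₂ : IsCoker c₂ a₂)
    {t₁ : B₁ ⟶ B} {t₂ : B₂ ⟶ B} (ht₁ : IsKer t₁ (b ≫ c₁)) (ht₂ : IsKer t₂ (b ≫ c₂))
    {e : B ⟶ M} {j : M ⟶ Q₂} (hej : e ≫ j = b ≫ c₂) (he : IsCoker e t₂)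
    {p : Q₂ ⟶ R} (hp : IsCoker p (a₁ ≫ c₂))
    (cond : ∀ ⦃P : D⦄ (t : P ⟶ M), t ≫ j ≫ p = 0 →
      ∀ ⦃E' : D⦄ (c : M ⟶ E'), IsCoker c (t₁ ≫ e) → t ≫ c = 0) :
    ∀ ⦃P : D⦄ (t : P ⟶ B) ⦃Q' : D⦄ (q' : Y ⟶ Q'), IsCokerPair q' a₁ a₂ →
      t ≫ b ≫ q' = 0 → ∀ ⦃E' : D⦄ (q : B ⟶ E'), IsCokerPair q t₁ t₂ → t ≫ q = 0 := by
  intro P t Q' q' hq' htq' E' q hq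
  have hpair : IsCokerPair (c₂ ≫ p) a₁ a₂ := isCokerPair_comp hc₂ hp
  have h1 : (t ≫ b) ≫ c₂ ≫ p = 0 :=
    hq'.kill_transfer hpair (by simpa [Category.assoc] using htq')
  have h2 : (t ≫ e) ≫ j ≫ p = 0 := by
    rw [Category.assoc, ← Category.assoc e j p, hej]
    simpa [Category.assoc] using h1
  have hcI : IsCoker (cokernel.π (t₁ ≫ e)) (t₁ ≫ e) :=
    isCoker_cokernelπ _
  have h3 : (t ≫ e) ≫ cokernel.π (t₁ ≫ e) = 0 := cond (t ≫ e) h2 _ hcI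
  have hpair2 : IsCokerPair (e ≫ cokernel.π (t₁ ≫ e)) t₁ t₂ := isCokerPair_comp he hcI
  exact hpair2.kill_transfer hq (by simpa [Category.assoc] using h3)

/-- Production step (Lemma B): from the "K ≤ L" condition one produces a factorization
of `b ≫ c₂` together with the corresponding exactness condition. -/
theorem lemB (hdi : IsDiExact D) {Y B A₁ A₂ B₁ B₂ Q₁ Q₂ R : D}
    {b : B ⟶ Y} (hb : IsNormalMonoMap b) {a₁ : A₁ ⟶ Y} {a₂ : A₂ ⟶ Y}
    {c₁ : Y ⟶ Q₁} {c₂ : Y ⟶ Q₂} (hc₁ : IsCoker c₁ a₁) (hc₂ : IsCoker c₂ a₂)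
    {t₁ : B₁ ⟶ B} {t₂ : B₂ ⟶ B} (ht₁ : IsKer t₁ (b ≫ c₁)) (ht₂ : IsKer t₂ (b ≫ c₂))
    {p : Q₂ ⟶ R} (hp : IsCoker p (a₁ ≫ c₂))
    (KL : ∀ ⦃P : D⦄ (t : P ⟶ B) ⦃Q' : D⦄ (q' : Y ⟶ Q'), IsCokerPair q' a₁ a₂ →
      t ≫ b ≫ q' = 0 → ∀ ⦃E' : D⦄ (q : B ⟶ E'), IsCokerPair q t₁ t₂ → t ≫ q = 0) :
    ∃ (M : D) (e : B ⟶ M) (j : M ⟶ Q₂), e ≫ j = b ≫ c₂ ∧ IsNormalMonoMap j ∧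
      IsCoker e t₂ ∧
      (∀ ⦃P : D⦄ (t : P ⟶ M), t ≫ j ≫ p = 0 →
        ∀ ⦃E' : D⦄ (c : M ⟶ E'), IsCoker c (t₁ ≫ e) → t ≫ c = 0) := by
  obtain ⟨M, e, j, hej, hjn, he⟩ := fact hdi hb hc₂.normalEpi ht₂
  -- γ := c₂ ≫ p is a normal epi
  have hγpair : IsCokerPair (c₂ ≫ p) a₁ a₂ := isCokerPair_comp hc₂ hp
  have hγepi : Epi (c₂ ≫ p) := by
    have := hc₂.epi; have := hp.epi; exact epi_comp _ _
  have hγ : IsNormalEpiMap (c₂ ≫ p) :=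
    (isCoker_of_pair_ker hγpair hγepi
      (isKer_kernelι (c₂ ≫ p))).normalEpi
  have htK : IsKer (kernel.ι (b ≫ c₂ ≫ p)) (b ≫ c₂ ≫ p) :=
    isKer_kernelι _
  obtain ⟨Eb, η, θ, hηθ, hθm, hη⟩ := mc hdi hb hγ hp.normalEpi hej he.epi hjn htK
  refine ⟨M, e, j, hej, hjn, he, fun P t ht E' c hc => ?_⟩
  have h1 : t ≫ η = 0 := by
    have h0 : (t ≫ η) ≫ θ = 0 := by rw [Category.assoc, hηθ]; exact ht
    exact hθm.right_cancellation _ _ (by simpa using h0)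
  -- c factors through η
  have hpair2 : IsCokerPair (e ≫ c) t₁ t₂ := isCokerPair_comp he hc
  have h2 : kernel.ι (b ≫ c₂ ≫ p) ≫ e ≫ c = 0 :=
    KL (kernel.ι (b ≫ c₂ ≫ p)) (c₂ ≫ p) hγpair (by simpa using htK.w) (e ≫ c) hpair2
  obtain ⟨h', hh'⟩ := hη.desc c (by simpa [Category.assoc] using h2)
  rw [← hh', ← Category.assoc, h1, zero_comp]

end Core

end St16
namespace St16

open CategoryTheory CategoryTheory.Limits

section CoreC

variable {D : Type*} [Category D] [HasZeroMorphisms D] [HasKernels D] [HasCokernels D]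

/-- The symmetric exchange lemma (E2): the exactness condition for the `B`-side image
factorization in `Z` transfers to the `V`-side one. -/
theorem lemC (hdi : IsDiExact D) {Y Z B V YV YB BV VB ZV ZB M₁ M₂ B₂ V₂ : D}
    {b : B ⟶ Y} (hb : IsNormalMonoMap b) {v : V ⟶ Y} (hv : IsNormalMonoMap v)
    {g : Y ⟶ Z}
    {cV : Y ⟶ YV} (hcV : IsCoker cV v) {cB : Y ⟶ YB} (hcB : IsCoker cB b)
    {tbv : BV ⟶ B} (htbv : IsKer tbv (b ≫ cV)) {tvb : VB ⟶ V} (htvb : IsKer tvb (v ≫ cB))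
    {qV : Z ⟶ ZV} (hqV : IsCoker qV (v ≫ g)) {qB : Z ⟶ ZB} (hqB : IsCoker qB (b ≫ g))
    {eB : B ⟶ M₁} {jB : M₁ ⟶ Z} (hBej : eB ≫ jB = b ≫ g) (hjBn : IsNormalMonoMap jB)
    {t₂B : B₂ ⟶ B} (heB : IsCoker eB t₂B)
    (condB : ∀ ⦃P : D⦄ (t : P ⟶ M₁), t ≫ jB ≫ qV = 0 →
      ∀ ⦃E' : D⦄ (c : M₁ ⟶ E'), IsCoker c (tbv ≫ eB) → t ≫ c = 0)
    {eV : V ⟶ M₂} {jV : M₂ ⟶ Z} (hVej : eV ≫ jV = v ≫ g) (hjVn : IsNormalMonoMap jV)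
    {t₂V : V₂ ⟶ V} (heV : IsCoker eV t₂V) :
    ∀ ⦃P : D⦄ (t : P ⟶ M₂), t ≫ jV ≫ qB = 0 →
      ∀ ⦃E' : D⦄ (c' : M₂ ⟶ E'), IsCoker c' (tvb ≫ eV) → t ≫ c' = 0 := by
  have hvker : IsKer v cV := isKer_of_coker hv hcV
  obtain ⟨β, hβ⟩ := hvker.lift (tbv ≫ b) (by rw [Category.assoc]; exact htbv.w)
  obtain ⟨α, hα⟩ := htvb.lift β (by
    rw [← Category.assoc, hβ]
    rw [Category.assoc, hcB.w, comp_zero])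
  have hkKB := isKer_kernelι (jB ≫ qV)
  have hkKV := isKer_kernelι (jV ≫ qB)
  set kKB := kernel.ι (jB ≫ qV) with hkKBdef
  set kKV := kernel.ι (jV ≫ qB) with hkKVdef
  obtain ⟨J, ε₂, κ₂, hεκ, hκ₂n, hε₂⟩ :=
    fact hdi htbv.normalMono heB.normalEpi (isKer_kernelι (tbv ≫ eB))
  have hκjq : κ₂ ≫ jB ≫ qV = 0 := by
    refine hε₂.epi.left_cancellation _ _ ?_
    rw [comp_zero, ← Category.assoc, hεκ]
    rw [Category.assoc, ← Category.assoc eB jB qV, hBej]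
    rw [← Category.assoc, ← Category.assoc, ← hβ]
    rw [Category.assoc, Category.assoc, ← Category.assoc v g qV, hqV.w, comp_zero]
  obtain ⟨ι₂, hι₂⟩ := hkKB.lift κ₂ hκjq
  have hc₂'εκ : IsCoker (cokernel.π (tbv ≫ eB)) (ε₂ ≫ κ₂) := by
    rw [hεκ]; exact isCoker_cokernelπ _
  have hκc₂' : IsCoker (cokernel.π (tbv ≫ eB)) κ₂ := isCoker_epi_comp hc₂'εκ hε₂.epi
  have hκker : IsKer κ₂ (cokernel.π (tbv ≫ eB)) := isKer_of_coker hκ₂n hκc₂'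
  have hkc : kKB ≫ cokernel.π (tbv ≫ eB) = 0 :=
    condB kKB (hkKB.w) _ (isCoker_cokernelπ _)
  obtain ⟨ib, hib⟩ := hκker.lift kKB hkc
  -- the two meets agree
  have hqVjV : IsCoker qV jV := by
    refine isCoker_epi_comp (e := eV) ?_ heV.epi
    rw [hVej]; exact hqV
  have hjVker : IsKer jV qV := isKer_of_coker hjVn hqVjV
  have hqBjB : IsCoker qB jB := by
    refine isCoker_epi_comp (e := eB) ?_ heB.epi
    rw [hBej]; exact hqB
  have hjBker : IsKer jB qB := isKer_of_coker hjBn hqBjB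
  obtain ⟨φh, hφh⟩ := hjVker.lift (kKB ≫ jB) (by simpa [Category.assoc] using hkKB.w)
  have hjBqB : jB ≫ qB = 0 := by
    refine heB.epi.left_cancellation _ _ ?_
    rw [comp_zero, ← Category.assoc, hBej]; exact hqB.w
  have hjVqV : jV ≫ qV = 0 := by
    refine heV.epi.left_cancellation _ _ ?_
    rw [comp_zero, ← Category.assoc, hVej]; exact hqV.w
  obtain ⟨φ, hφ⟩ := hkKV.lift φh (by
    rw [← Category.assoc, hφh, Category.assoc, hjBqB, comp_zero])
  obtain ⟨ψh, hψh⟩ := hjBker.lift (kKV ≫ jV) (by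
    rw [Category.assoc]; exact hkKV.w)
  obtain ⟨φ', hφ'⟩ := hkKB.lift ψh (by
    rw [← Category.assoc, hψh, Category.assoc, hjVqV, comp_zero])
  have hjVm : Mono jV := mono_of_normalMono hjVn
  have hjBm : Mono jB := mono_of_normalMono hjBn
  have e1 : φ ≫ kKV ≫ jV = kKB ≫ jB := by rw [← Category.assoc, hφ, hφh]
  have e2 : φ' ≫ kKB ≫ jB = kKV ≫ jV := by rw [← Category.assoc, hφ', hψh]
  have hmKVjV : Mono (kKV ≫ jV) := by
    have := hkKV.mono; exact mono_comp _ _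
  have hφφ' : φ' ≫ φ = 𝟙 _ := by
    refine hmKVjV.right_cancellation _ _ ?_
    rw [Category.assoc, e1, e2, Category.id_comp]
  have hii : ib ≫ ι₂ = 𝟙 _ := by
    refine hkKB.mono.right_cancellation _ _ ?_
    rw [Category.assoc, hι₂, hib, Category.id_comp]
  -- the covering relation
  have hPi : (ε₂ ≫ ι₂ ≫ φ) ≫ kKV = α ≫ tvb ≫ eV := by
    refine hjVm.right_cancellation _ _ ?_
    calc ((ε₂ ≫ ι₂ ≫ φ) ≫ kKV) ≫ jV = ε₂ ≫ ι₂ ≫ φ ≫ kKV ≫ jV := by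
          simp [Category.assoc]
      _ = ε₂ ≫ ι₂ ≫ kKB ≫ jB := by rw [e1]
      _ = (ε₂ ≫ κ₂) ≫ jB := by
          rw [← Category.assoc ι₂ kKB jB, hι₂, ← Category.assoc]
      _ = (tbv ≫ b) ≫ g := by rw [hεκ, Category.assoc, hBej, ← Category.assoc]
      _ = β ≫ eV ≫ jV := by rw [← hβ, Category.assoc, ← hVej]
      _ = (α ≫ tvb ≫ eV) ≫ jV := by rw [← hα]; simp [Category.assoc]
  intro P t ht E' c' hc'
  obtain ⟨s, hs⟩ := hkKV.lift t ht
  have hkc' : kKV ≫ c' = 0 := by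
    have h0 : (ε₂ ≫ ι₂ ≫ φ) ≫ kKV ≫ c' = 0 := by
      rw [← Category.assoc, hPi]
      rw [Category.assoc, Category.assoc]
      rw [← Category.assoc tvb eV c', hc'.w]
      simp
    have h1 : (ι₂ ≫ φ) ≫ kKV ≫ c' = 0 :=
      hε₂.epi.left_cancellation _ _ (by simpa [Category.assoc] using h0)
    have h2 : φ ≫ kKV ≫ c' = 0 := by
      have := congrArg (fun z => ib ≫ z) h1
      simpa [← Category.assoc, hii] using this
    calc kKV ≫ c' = (φ' ≫ φ) ≫ kKV ≫ c' := by rw [hφφ']; simp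
    _ = 0 := by rw [Category.assoc, h2, comp_zero]
  rw [← hs, Category.assoc, hkc', comp_zero]

end CoreC

end St16
namespace St16

open CategoryTheory CategoryTheory.Limits

section SESLevel

variable {C : Type u} [Category.{v} C] [HasZeroMorphisms C] [HasKernels C] [HasCokernels C]

@[simp] theorem comp_a {S T R : SES C} (f : S ⟶ T) (g : T ⟶ R) :
    (f ≫ g).a = f.a ≫ g.a := rfl
@[simp] theorem comp_b {S T R : SES C} (f : S ⟶ T) (g : T ⟶ R) :
    (f ≫ g).b = f.b ≫ g.b := rfl
@[simp] theorem comp_c {S T R : SES C} (f : S ⟶ T) (g : T ⟶ R) :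
    (f ≫ g).c = f.c ≫ g.c := rfl
@[simp] theorem zero_a {S T : SES C} : (0 : S ⟶ T).a = 0 := rfl
@[simp] theorem zero_b {S T : SES C} : (0 : S ⟶ T).b = 0 := rfl
@[simp] theorem zero_c {S T : SES C} : (0 : S ⟶ T).c = 0 := rfl
@[simp] theorem id_a {S : SES C} : (𝟙 S : S ⟶ S).a = 𝟙 S.X := rfl
@[simp] theorem id_b {S : SES C} : (𝟙 S : S ⟶ S).b = 𝟙 S.Y := rfl
@[simp] theorem id_c {S : SES C} : (𝟙 S : S ⟶ S).c = 𝟙 S.Z := rfl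

theorem ses_isKer (S : SES C) : IsKer S.f S.g := isKer_of_isLimit S.isKernel.some
theorem ses_isCoker (S : SES C) : IsCoker S.g S.f := isCoker_of_isColimit S.isCokernel.some

variable {W T : SES C} (χ : W ⟶ T)

/-- The canonical cokernel object of a morphism of short exact sequences. -/
@[reducible] noncomputable def cQ : SES C where
  X := kernel (cokernel.π (T.f ≫ cokernel.π χ.b))
  Y := cokernel χ.b
  Z := cokernel (T.f ≫ cokernel.π χ.b)
  f := kernel.ι _
  g := cokernel.π (T.f ≫ cokernel.π χ.b)
  w := kernel.condition _
  isKernel := ⟨(isKer_kernelι _).isLimit⟩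
  isCokernel :=
    ⟨(isCoker_of_ker (isCoker_cokernelπ (T.f ≫ cokernel.π χ.b)) (isKer_kernelι _)).isColimit⟩

/-- The canonical cokernel projection. -/
noncomputable def cq : T ⟶ cQ χ :=
  have hEx : ∃ s : T.Z ⟶ cokernel (T.f ≫ cokernel.π χ.b),
      T.g ≫ s = cokernel.π χ.b ≫ cokernel.π (T.f ≫ cokernel.π χ.b) :=
    (ses_isCoker T).desc _ (by rw [← Category.assoc]; exact cokernel.condition _)
  { a := kernel.lift _ (T.f ≫ cokernel.π χ.b) (cokernel.condition _)
    b := cokernel.π χ.b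
    c := hEx.choose
    comm₁ := (kernel.lift_ι _ _ _).symm
    comm₂ := hEx.choose_spec }

theorem cq_b : (cq χ).b = cokernel.π χ.b := rfl
theorem cq_a_f : (cq χ).a ≫ (cQ χ).f = T.f ≫ cokernel.π χ.b := kernel.lift_ι _ _ _

theorem cq_w : χ ≫ cq χ = 0 := by
  apply SES.Hom.ext
  · refine (ses_isKer (cQ χ)).mono.right_cancellation _ _ ?_
    show (χ.a ≫ (cq χ).a) ≫ (cQ χ).f = (0 : W.X ⟶ (cQ χ).X) ≫ (cQ χ).f
    rw [zero_comp, Category.assoc, cq_a_f, ← Category.assoc, ← χ.comm₁,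
      Category.assoc, cokernel.condition, comp_zero]
  · show χ.b ≫ cokernel.π χ.b = 0
    exact cokernel.condition _
  · refine (ses_isCoker W).epi.left_cancellation _ _ ?_
    show W.g ≫ χ.c ≫ (cq χ).c = W.g ≫ (0 : W.Z ⟶ (cQ χ).Z)
    rw [comp_zero, ← Category.assoc, χ.comm₂, Category.assoc, (cq χ).comm₂,
      ← Category.assoc, cq_b, cokernel.condition, zero_comp]

/-- Descent morphism out of the canonical cokernel. -/
noncomputable def cdesc {R : SES C} (ρ : T ⟶ R) (hρ : χ ≫ ρ = 0) : cQ χ ⟶ R := by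
  have hb : χ.b ≫ ρ.b = 0 := by
    have := congrArg SES.Hom.b hρ; simpa using this
  have hc0 : (T.f ≫ cokernel.π χ.b) ≫ cokernel.desc χ.b ρ.b hb ≫ R.g = 0 := by
    rw [← Category.assoc, Category.assoc T.f _ _, cokernel.π_desc,
      ρ.comm₁, Category.assoc, R.w, comp_zero]
  have ha0 : ((cQ χ).f ≫ cokernel.desc χ.b ρ.b hb) ≫ R.g = 0 := by
    rw [Category.assoc, ← cokernel.π_desc (T.f ≫ cokernel.π χ.b) _ hc0,
      ← Category.assoc]
    rw [show (cQ χ).f ≫ cokernel.π (T.f ≫ cokernel.π χ.b) = 0 from (cQ χ).w, zero_comp]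
  have hEx := (ses_isKer R).lift ((cQ χ).f ≫ cokernel.desc χ.b ρ.b hb) ha0
  exact
    { a := hEx.choose
      b := cokernel.desc χ.b ρ.b hb
      c := cokernel.desc (T.f ≫ cokernel.π χ.b) (cokernel.desc χ.b ρ.b hb ≫ R.g) hc0
      comm₁ := hEx.choose_spec.symm
      comm₂ := (cokernel.π_desc _ _ _) }

theorem cq_fac {R : SES C} (ρ : T ⟶ R) (hρ : χ ≫ ρ = 0) : cq χ ≫ cdesc χ ρ hρ = ρ := by
  have hb : (cq χ).b ≫ (cdesc χ ρ hρ).b = ρ.b := cokernel.π_desc _ _ _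
  have hb' : cokernel.π χ.b ≫ (cdesc χ ρ hρ).b = ρ.b := cokernel.π_desc _ _ _
  apply SES.Hom.ext
  · refine (ses_isKer R).mono.right_cancellation _ _ ?_
    show ((cq χ).a ≫ (cdesc χ ρ hρ).a) ≫ R.f = ρ.a ≫ R.f
    rw [Category.assoc, ← (cdesc χ ρ hρ).comm₁, ← Category.assoc, cq_a_f,
      Category.assoc, hb']
    exact ρ.comm₁
  · exact hb
  · refine (ses_isCoker T).epi.left_cancellation _ _ ?_
    show T.g ≫ (cq χ).c ≫ (cdesc χ ρ hρ).c = T.g ≫ ρ.c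
    rw [← Category.assoc, (cq χ).comm₂, Category.assoc, (cdesc χ ρ hρ).comm₂,
      ← Category.assoc, hb, ρ.comm₂]

theorem cq_uniq {R : SES C} (ρ : T ⟶ R) (hρ : χ ≫ ρ = 0) (σ' : cQ χ ⟶ R)
    (h : cq χ ≫ σ' = ρ) : σ' = cdesc χ ρ hρ := by
  have hb : σ'.b = (cdesc χ ρ hρ).b := by
    have h1 : (cq χ).b ≫ σ'.b = ρ.b := by
      have := congrArg SES.Hom.b h; simpa using this
    have h2 : (cq χ).b ≫ (cdesc χ ρ hρ).b = ρ.b := cokernel.π_desc _ _ _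
    have : Epi (cq χ).b := by show Epi (cokernel.π χ.b); infer_instance
    exact this.left_cancellation _ _ (h1.trans h2.symm)
  apply SES.Hom.ext
  · refine (ses_isKer R).mono.right_cancellation _ _ ?_
    rw [← σ'.comm₁, ← (cdesc χ ρ hρ).comm₁, hb]
  · exact hb
  · have : Epi (cQ χ).g := (ses_isCoker (cQ χ)).epi
    refine this.left_cancellation _ _ ?_
    rw [σ'.comm₂, (cdesc χ ρ hρ).comm₂, hb]

/-- The canonical cokernel is a cokernel in `SES C`. -/
noncomputable def cqIsColimit : IsColimit (CokernelCofork.ofπ (cq χ) (cq_w χ)) :=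
  CokernelCofork.IsColimit.ofπ _ _ (fun {R} ρ hρ => cdesc χ ρ hρ)
    (fun {R} ρ hρ => cq_fac χ ρ hρ) (fun {R} ρ hρ σ' h => cq_uniq χ ρ hρ σ' h)

end SESLevel

end St16
namespace St16

open CategoryTheory CategoryTheory.Limits

section SESLevel2

variable {C : Type u} [Category.{v} C] [HasZeroMorphisms C] [HasKernels C] [HasCokernels C]

theorem cQ_g {W T : SES C} (χ : W ⟶ T) :
    (cQ χ).g = cokernel.π (T.f ≫ cokernel.π χ.b) := rfl

/-- Consuming a cokernel in `SES C`: componentwise information. -/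
theorem ses_coker_consume {W T Q' : SES C} (χ : W ⟶ T) (q' : T ⟶ Q') (wq' : χ ≫ q' = 0)
    (h' : IsColimit (CokernelCofork.ofπ q' wq')) :
    IsCoker q'.b χ.b ∧ IsCoker Q'.g (T.f ≫ q'.b) := by
  have hcan := cqIsColimit χ
  set i : cQ χ ≅ Q' := hcan.coconePointUniqueUpToIso h' with hi
  have hcomm : cq χ ≫ i.hom = q' := by
    have := hcan.comp_coconePointUniqueUpToIso_hom h' WalkingParallelPair.one
    simpa using this
  have hbb : i.hom.b ≫ i.inv.b = 𝟙 _ := by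
    have h0 := congrArg SES.Hom.b i.hom_inv_id
    rw [comp_b, id_b] at h0; exact h0
  have hbb' : i.inv.b ≫ i.hom.b = 𝟙 _ := by
    have h0 := congrArg SES.Hom.b i.inv_hom_id
    rw [comp_b, id_b] at h0; exact h0
  have hq'b : q'.b = cokernel.π χ.b ≫ i.hom.b := by
    have h0 := congrArg SES.Hom.b hcomm
    rw [comp_b, cq_b] at h0
    exact h0.symm
  have hepi : Epi i.hom.b := by
    constructor
    intro Z' u u' h
    have := congrArg (fun z => i.inv.b ≫ z) h
    simpa [← Category.assoc, hbb'] using this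
  constructor
  · refine ⟨by simpa using congrArg SES.Hom.b wq', ?_, fun P t ht => ?_⟩
    · rw [hq'b]
      haveI := hepi
      exact epi_comp _ _
    · refine ⟨i.inv.b ≫ cokernel.desc χ.b t ht, ?_⟩
      rw [hq'b, Category.assoc, ← Category.assoc i.hom.b, hbb, Category.id_comp,
        cokernel.π_desc]
  · refine ⟨?_, (ses_isCoker Q').epi, fun P t ht => ?_⟩
    · rw [Category.assoc, ← q'.comm₂, ← Category.assoc, T.w, zero_comp]
    · have h1 : (T.f ≫ cokernel.π χ.b) ≫ i.hom.b ≫ t = 0 := by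
        rw [Category.assoc, ← Category.assoc (cokernel.π χ.b) i.hom.b t, ← hq'b,
          ← Category.assoc]
        exact ht
      obtain ⟨s, hs⟩ := (isCoker_cokernelπ (T.f ≫ cokernel.π χ.b)).desc (i.hom.b ≫ t) h1
      refine ⟨i.inv.c ≫ s, ?_⟩
      have hc2 : Q'.g ≫ i.inv.c = i.inv.b ≫ (cQ χ).g := i.inv.comm₂
      rw [← Category.assoc, hc2, Category.assoc, cQ_g, hs, ← Category.assoc, hbb',
        Category.id_comp]

variable {S V' : SES C} (ψ : S ⟶ V')

/-- The canonical kernel object of a morphism of short exact sequences. -/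
@[reducible] noncomputable def cK : SES C where
  X := kernel (kernel.ι ψ.b ≫ S.g)
  Y := kernel ψ.b
  Z := cokernel (kernel.ι (kernel.ι ψ.b ≫ S.g))
  f := kernel.ι _
  g := cokernel.π _
  w := cokernel.condition _
  isKernel := ⟨(isKer_of_coker (isKer_kernelι _).normalMono (isCoker_cokernelπ _)).isLimit⟩
  isCokernel := ⟨(isCoker_cokernelπ _).isColimit⟩

theorem cK_f (ψ : S ⟶ V') : (cK ψ).f = kernel.ι (kernel.ι ψ.b ≫ S.g) := rfl
theorem cK_g (ψ : S ⟶ V') : (cK ψ).g = cokernel.π (kernel.ι (kernel.ι ψ.b ≫ S.g)) := rfl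

/-- The canonical kernel inclusion. -/
noncomputable def cm : cK ψ ⟶ S :=
  have hEx : ∃ s : kernel (kernel.ι ψ.b ≫ S.g) ⟶ S.X,
      s ≫ S.f = kernel.ι (kernel.ι ψ.b ≫ S.g) ≫ kernel.ι ψ.b :=
    (ses_isKer S).lift (kernel.ι (kernel.ι ψ.b ≫ S.g) ≫ kernel.ι ψ.b)
      (by rw [Category.assoc]; exact kernel.condition _)
  { a := hEx.choose
    b := kernel.ι ψ.b
    c := cokernel.desc _ (kernel.ι ψ.b ≫ S.g) (kernel.condition _)
    comm₁ := hEx.choose_spec.symm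
    comm₂ := cokernel.π_desc _ _ _ }

theorem cm_b : (cm ψ).b = kernel.ι ψ.b := rfl
theorem cm_a_f : (cm ψ).a ≫ S.f = (cK ψ).f ≫ kernel.ι ψ.b :=
  (cm ψ).comm₁.symm

theorem cm_w : cm ψ ≫ ψ = 0 := by
  apply SES.Hom.ext
  · refine (ses_isKer V').mono.right_cancellation _ _ ?_
    show ((cm ψ).a ≫ ψ.a) ≫ V'.f = (0 : (cK ψ).X ⟶ V'.X) ≫ V'.f
    rw [zero_comp, Category.assoc, ← ψ.comm₁, ← Category.assoc]
    rw [show (cm ψ).a ≫ S.f = (cK ψ).f ≫ kernel.ι ψ.b from cm_a_f ψ, Category.assoc,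
      kernel.condition, comp_zero]
  · show kernel.ι ψ.b ≫ ψ.b = 0
    exact kernel.condition _
  · refine (ses_isCoker (cK ψ)).epi.left_cancellation _ _ ?_
    show (cK ψ).g ≫ (cm ψ).c ≫ ψ.c = (cK ψ).g ≫ (0 : (cK ψ).Z ⟶ V'.Z)
    rw [comp_zero, ← Category.assoc, (cm ψ).comm₂, Category.assoc, ψ.comm₂,
      ← Category.assoc, cm_b, kernel.condition, zero_comp]

/-- Lift into the canonical kernel. -/
noncomputable def clift {R : SES C} (ρ : R ⟶ S) (hρ : ρ ≫ ψ = 0) : R ⟶ cK ψ := by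
  have hb : ρ.b ≫ ψ.b = 0 := by
    have := congrArg SES.Hom.b hρ; simpa using this
  have ha0 : (R.f ≫ kernel.lift ψ.b ρ.b hb) ≫ kernel.ι ψ.b ≫ S.g = 0 := by
    rw [Category.assoc, ← Category.assoc (kernel.lift ψ.b ρ.b hb), kernel.lift_ι,
      ← Category.assoc, ρ.comm₁, Category.assoc, S.w, comp_zero]
  have hc0 : R.f ≫ kernel.lift ψ.b ρ.b hb ≫ (cK ψ).g = 0 := by
    rw [← Category.assoc, ← kernel.lift_ι (kernel.ι ψ.b ≫ S.g) _ ha0, Category.assoc,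
      ← cK_f ψ]
    rw [show (cK ψ).f ≫ (cK ψ).g = 0 from (cK ψ).w, comp_zero]
  have hEx := (ses_isCoker R).desc (kernel.lift ψ.b ρ.b hb ≫ (cK ψ).g) hc0
  exact
    { a := kernel.lift _ (R.f ≫ kernel.lift ψ.b ρ.b hb) ha0
      b := kernel.lift ψ.b ρ.b hb
      c := hEx.choose
      comm₁ := (kernel.lift_ι _ _ _).symm
      comm₂ := hEx.choose_spec }

theorem cm_fac {R : SES C} (ρ : R ⟶ S) (hρ : ρ ≫ ψ = 0) : clift ψ ρ hρ ≫ cm ψ = ρ := by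
  have hb : (clift ψ ρ hρ).b ≫ (cm ψ).b = ρ.b := kernel.lift_ι _ _ _
  apply SES.Hom.ext
  · refine (ses_isKer S).mono.right_cancellation _ _ ?_
    show ((clift ψ ρ hρ).a ≫ (cm ψ).a) ≫ S.f = ρ.a ≫ S.f
    rw [Category.assoc, cm_a_f, ← Category.assoc]
    rw [show (clift ψ ρ hρ).a ≫ (cK ψ).f = R.f ≫ (clift ψ ρ hρ).b from
      (clift ψ ρ hρ).comm₁.symm]
    have hb' : (clift ψ ρ hρ).b ≫ kernel.ι ψ.b = ρ.b := kernel.lift_ι _ _ _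
    rw [Category.assoc, hb']
    exact ρ.comm₁
  · exact hb
  · refine (ses_isCoker R).epi.left_cancellation _ _ ?_
    show R.g ≫ (clift ψ ρ hρ).c ≫ (cm ψ).c = R.g ≫ ρ.c
    rw [← Category.assoc, (clift ψ ρ hρ).comm₂, Category.assoc, (cm ψ).comm₂,
      ← Category.assoc, hb, ρ.comm₂]

theorem cm_uniq {R : SES C} (ρ : R ⟶ S) (hρ : ρ ≫ ψ = 0) (σ' : R ⟶ cK ψ)
    (h : σ' ≫ cm ψ = ρ) : σ' = clift ψ ρ hρ := by
  have hmb : Mono (cm ψ).b := by rw [cm_b]; infer_instance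
  have hb : σ'.b = (clift ψ ρ hρ).b := by
    refine hmb.right_cancellation _ _ ?_
    have h1 : σ'.b ≫ (cm ψ).b = ρ.b := by
      have := congrArg SES.Hom.b h; simpa using this
    have h2 : (clift ψ ρ hρ).b ≫ (cm ψ).b = ρ.b := kernel.lift_ι _ _ _
    rw [h1, h2]
  apply SES.Hom.ext
  · refine (ses_isKer (cK ψ)).mono.right_cancellation ?_ ?_ ?_
    rw [← σ'.comm₁, ← (clift ψ ρ hρ).comm₁, hb]
  · exact hb
  · refine (ses_isCoker R).epi.left_cancellation _ _ ?_
    rw [σ'.comm₂, (clift ψ ρ hρ).comm₂, hb]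

/-- The canonical kernel is a kernel in `SES C`. -/
noncomputable def cmIsLimit : IsLimit (KernelFork.ofι (cm ψ) (cm_w ψ)) :=
  KernelFork.IsLimit.ofι _ _ (fun {R} ρ hρ => clift ψ ρ hρ)
    (fun {R} ρ hρ => cm_fac ψ ρ hρ) (fun {R} ρ hρ σ' h => cm_uniq ψ ρ hρ σ' h)

/-- Consuming a kernel in `SES C`: componentwise information. -/
theorem ses_ker_consume {K S V' : SES C} (ψ : S ⟶ V') (m' : K ⟶ S) (wm' : m' ≫ ψ = 0)
    (h' : IsLimit (KernelFork.ofι m' wm')) :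
    IsKer m'.b ψ.b ∧ IsKer K.f (m'.b ≫ S.g) := by
  have hcan := cmIsLimit ψ
  set i : K ≅ cK ψ := h'.conePointUniqueUpToIso hcan with hi
  have hcomm : i.hom ≫ cm ψ = m' := by
    have := IsLimit.conePointUniqueUpToIso_hom_comp h' hcan WalkingParallelPair.zero
    simpa using this
  have hbb : i.hom.b ≫ i.inv.b = 𝟙 _ := by
    have h0 := congrArg SES.Hom.b i.hom_inv_id
    rw [comp_b, id_b] at h0; exact h0
  have hbb' : i.inv.b ≫ i.hom.b = 𝟙 _ := by
    have h0 := congrArg SES.Hom.b i.inv_hom_id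
    rw [comp_b, id_b] at h0; exact h0
  have hm'b : m'.b = i.hom.b ≫ kernel.ι ψ.b := by
    have h0 := congrArg SES.Hom.b hcomm
    rw [comp_b, cm_b] at h0
    exact h0.symm
  have hmono : Mono i.hom.b := by
    constructor
    intro Z' u u' h
    have := congrArg (fun z => z ≫ i.inv.b) h
    simpa [Category.assoc, hbb] using this
  constructor
  · refine ⟨by simpa using congrArg SES.Hom.b wm', ?_, fun P t ht => ?_⟩
    · rw [hm'b]
      haveI := hmono
      exact mono_comp _ _
    · refine ⟨kernel.lift ψ.b t ht ≫ i.inv.b, ?_⟩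
      rw [hm'b, Category.assoc, ← Category.assoc i.inv.b, hbb', Category.id_comp,
        kernel.lift_ι]
  · refine ⟨?_, (ses_isKer K).mono, fun P t ht => ?_⟩
    · rw [← Category.assoc, m'.comm₁, Category.assoc, S.w, comp_zero]
    · have h1 : (t ≫ i.hom.b) ≫ kernel.ι ψ.b ≫ S.g = 0 := by
        rw [Category.assoc, ← Category.assoc i.hom.b, ← hm'b, ← Category.assoc]
        rw [Category.assoc]
        exact ht
      refine ⟨kernel.lift _ (t ≫ i.hom.b) h1 ≫ i.inv.a, ?_⟩
      rw [Category.assoc, ← i.inv.comm₁, ← Category.assoc, cK_f, kernel.lift_ι,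
        Category.assoc, hbb, Category.comp_id]

end SESLevel2

end St16
namespace St16

open CategoryTheory CategoryTheory.Limits

section Production

variable {C : Type u} [Category.{v} C] [HasZeroMorphisms C] [HasKernels C] [HasCokernels C]

theorem isKer_own_coker {K A B : C} {k : K ⟶ A} {f : A ⟶ B} (h : IsKer k f) :
    IsKer k (cokernel.π k) := by
  refine ⟨cokernel.condition k, h.mono, fun P t ht => ?_⟩
  obtain ⟨h', hh'⟩ := (isCoker_cokernelπ k).desc f h.w
  exact h.lift t (by rw [← hh', ← Category.assoc, ht, zero_comp])

/-- Build a short exact sequence from the kernel of a morphism. -/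
@[reducible] noncomputable def sesKer {A B : C} (φ : A ⟶ B) : SES C where
  X := kernel φ
  Y := A
  Z := cokernel (kernel.ι φ)
  f := kernel.ι φ
  g := cokernel.π (kernel.ι φ)
  w := cokernel.condition _
  isKernel := ⟨(isKer_own_coker (isKer_kernelι φ)).isLimit⟩
  isCokernel := ⟨(isCoker_cokernelπ _).isColimit⟩

theorem sesKer_f {A B : C} (φ : A ⟶ B) : (sesKer φ).f = kernel.ι φ := rfl
theorem sesKer_g {A B : C} (φ : A ⟶ B) :
    (sesKer φ).g = cokernel.π (kernel.ι φ) := rfl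

/-- The production step: from the factorization data for `μ.b ≫ cT.b` satisfying the
exactness condition, `μ ≫ cT` is a normal map in `SES C`. -/
theorem production (S U QT : SES C) (μ : U ⟶ S) (cT : S ⟶ QT)
    (huX : IsKer U.f (μ.b ≫ S.g))
    (hpB : IsCoker QT.g (S.f ≫ cT.b))
    {M' : C} {e' : U.Y ⟶ M'} {j' : M' ⟶ QT.Y}
    (he'j' : e' ≫ j' = μ.b ≫ cT.b) (hj'n : IsNormalMonoMap j')
    (hcoe' : IsCoker e' (kernel.ι (μ.b ≫ cT.b)))
    (cond' : ∀ ⦃P : C⦄ (t : P ⟶ M'), t ≫ j' ≫ QT.g = 0 →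
      ∀ ⦃E' : C⦄ (c : M' ⟶ E'), IsCoker c (U.f ≫ e') → t ≫ c = 0) :
    IsNormalMap (μ ≫ cT) := by
  classical
  have hxg : IsKer S.f S.g := ses_isKer S
  have hQTf : IsKer QT.f QT.g := ses_isKer QT
  have hUf : IsKer U.f U.g := ses_isKer U
  have hUg : IsCoker U.g U.f := ses_isCoker U
  have hj'm : Mono j' := mono_of_normalMono hj'n
  set φ := j' ≫ QT.g with hφdef
  set I₀ : SES C := sesKer φ with hI₀
  -- the epi part E₀ : U ⟶ I₀
  obtain ⟨ξ, hξ⟩ := hxg.lift (U.f ≫ μ.b) (by rw [Category.assoc]; exact huX.w)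
  have hEa0 : (U.f ≫ e') ≫ φ = 0 := by
    calc (U.f ≫ e') ≫ j' ≫ QT.g = U.f ≫ (e' ≫ j') ≫ QT.g := by simp [Category.assoc]
      _ = (U.f ≫ μ.b) ≫ cT.b ≫ QT.g := by rw [he'j']; simp [Category.assoc]
      _ = ξ ≫ (S.f ≫ cT.b) ≫ QT.g := by rw [← hξ]; simp [Category.assoc]
      _ = 0 := by rw [hpB.w, comp_zero]
  set Ea := kernel.lift φ (U.f ≫ e') hEa0 with hEadef
  have hEaf : Ea ≫ kernel.ι φ = U.f ≫ e' := kernel.lift_ι _ _ _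
  have hEc0 : U.f ≫ e' ≫ cokernel.π (kernel.ι φ) = 0 := by
    rw [← Category.assoc, ← hEaf, Category.assoc, cokernel.condition, comp_zero]
  obtain ⟨Ec, hEc⟩ := hUg.desc (e' ≫ cokernel.π (kernel.ι φ)) hEc0
  set E₀ : U ⟶ I₀ := ⟨Ea, e', Ec, hEaf.symm, hEc⟩ with hE₀
  -- the mono part Mo₀ : I₀ ⟶ QT
  obtain ⟨Ma, hMa⟩ := hQTf.lift (kernel.ι φ ≫ j')
    (by rw [Category.assoc]; exact kernel.condition φ)
  set Mc := cokernel.desc (kernel.ι φ) φ (kernel.condition φ) with hMcdef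
  have hMc : cokernel.π (kernel.ι φ) ≫ Mc = φ := cokernel.π_desc _ _ _
  set Mo₀ : I₀ ⟶ QT := ⟨Ma, j', Mc, hMa.symm, hMc⟩ with hMo₀
  -- E₀ ≫ Mo₀ = μ ≫ cT
  have hEM : E₀ ≫ Mo₀ = μ ≫ cT := by
    apply SES.Hom.ext
    · refine hQTf.mono.right_cancellation _ _ ?_
      show (Ea ≫ Ma) ≫ QT.f = (μ.a ≫ cT.a) ≫ QT.f
      rw [Category.assoc, hMa, ← Category.assoc, hEaf, Category.assoc, he'j',
        Category.assoc, ← cT.comm₁, ← Category.assoc, μ.comm₁, Category.assoc]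
    · exact he'j'
    · refine hUg.epi.left_cancellation _ _ ?_
      show U.g ≫ Ec ≫ Mc = U.g ≫ μ.c ≫ cT.c
      rw [← Category.assoc, hEc, Category.assoc, hMc, hφdef, ← Category.assoc,
        he'j', ← Category.assoc U.g μ.c, μ.comm₂, Category.assoc, ← cT.comm₂,
        ← Category.assoc, Category.assoc]
  -- E₀ is a normal epi
  set tvb := kernel.ι (μ.b ≫ cT.b) with htvbdef
  have htvbE : tvb ≫ e' = 0 := by
    refine hj'm.right_cancellation _ _ ?_
    rw [Category.assoc, he'j', zero_comp]
    exact kernel.condition _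
  obtain ⟨ka, hka⟩ := hUf.lift (kernel.ι (tvb ≫ U.g) ≫ tvb)
    (by rw [Category.assoc]; exact kernel.condition _)
  set kK : sesKer (tvb ≫ U.g) ⟶ U :=
    ⟨ka, tvb, cokernel.desc (kernel.ι (tvb ≫ U.g)) (tvb ≫ U.g) (kernel.condition _),
      hka.symm, (cokernel.π_desc _ _ _)⟩ with hkK
  have wk : kK ≫ E₀ = 0 := by
    apply SES.Hom.ext
    · refine (isKer_kernelι φ).mono.right_cancellation _ _ ?_
      show (ka ≫ Ea) ≫ kernel.ι φ = (0 : (sesKer (tvb ≫ U.g)).X ⟶ I₀.X) ≫ kernel.ι φ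
      rw [zero_comp, Category.assoc, hEaf, ← Category.assoc, hka, Category.assoc,
        htvbE, comp_zero]
    · show tvb ≫ e' = 0
      exact htvbE
    · refine (isCoker_cokernelπ (kernel.ι (tvb ≫ U.g))).epi.left_cancellation _ _ ?_
      show cokernel.π _ ≫ (cokernel.desc _ (tvb ≫ U.g) (kernel.condition _)) ≫ Ec =
        cokernel.π (kernel.ι (tvb ≫ U.g)) ≫ 0
      rw [comp_zero, ← Category.assoc, cokernel.π_desc, Category.assoc, hEc,
        ← Category.assoc, htvbE, zero_comp]
  have descEx : ∀ ⦃R : SES C⦄ (ρ : U ⟶ R), kK ≫ ρ = 0 →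
      ∃ σ : I₀ ⟶ R, E₀ ≫ σ = ρ ∧ ∀ σ'' : I₀ ⟶ R, E₀ ≫ σ'' = ρ → σ'' = σ := by
    intro R ρ hρ
    have hb0 : tvb ≫ ρ.b = 0 := congrArg SES.Hom.b hρ
    obtain ⟨σb, hσb⟩ := hcoe'.desc ρ.b hb0
    have hfc0 : kernel.ι φ ≫ cokernel.π (U.f ≫ e') = 0 :=
      cond' (kernel.ι φ) (kernel.condition φ) _ (isCoker_cokernelπ _)
    have hσbg : kernel.ι φ ≫ σb ≫ R.g = 0 := by
      have h1 : (U.f ≫ e') ≫ σb ≫ R.g = 0 := by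
        rw [Category.assoc, ← Category.assoc e' σb, hσb, ← Category.assoc,
          ρ.comm₁, Category.assoc, R.w, comp_zero]
      obtain ⟨h₁, hh₁⟩ := (isCoker_cokernelπ (U.f ≫ e')).desc (σb ≫ R.g) h1
      rw [← hh₁, ← Category.assoc, hfc0, zero_comp]
    obtain ⟨σa, hσa⟩ := (ses_isKer R).lift (kernel.ι φ ≫ σb)
      (by rw [Category.assoc]; exact hσbg)
    refine ⟨⟨σa, σb, cokernel.desc (kernel.ι φ) (σb ≫ R.g) hσbg, hσa.symm,
      (cokernel.π_desc _ _ _)⟩, ?_, ?_⟩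
    · apply SES.Hom.ext
      · refine (ses_isKer R).mono.right_cancellation _ _ ?_
        show (Ea ≫ σa) ≫ R.f = ρ.a ≫ R.f
        rw [Category.assoc, hσa, ← Category.assoc, hEaf, Category.assoc, hσb,
          ρ.comm₁]
      · exact hσb
      · refine hUg.epi.left_cancellation _ _ ?_
        show U.g ≫ Ec ≫ cokernel.desc (kernel.ι φ) (σb ≫ R.g) hσbg = U.g ≫ ρ.c
        rw [← Category.assoc, hEc, Category.assoc, cokernel.π_desc,
          ← Category.assoc, hσb, ρ.comm₂]
    · intro σ'' h''
      have hb'' : e' ≫ σ''.b = ρ.b := congrArg SES.Hom.b h''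
      have hbeq : σ''.b = σb :=
        hcoe'.epi.left_cancellation _ _ (by rw [hb'', hσb])
      apply SES.Hom.ext
      · refine (ses_isKer R).mono.right_cancellation _ _ ?_
        show σ''.a ≫ R.f = σa ≫ R.f
        rw [← σ''.comm₁]
        show kernel.ι φ ≫ σ''.b = σa ≫ R.f
        rw [hbeq, hσa]
      · exact hbeq
      · refine (isCoker_cokernelπ (kernel.ι φ)).epi.left_cancellation _ _ ?_
        show cokernel.π (kernel.ι φ) ≫ σ''.c =
          cokernel.π (kernel.ι φ) ≫ cokernel.desc (kernel.ι φ) (σb ≫ R.g) hσbg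
        rw [cokernel.π_desc]
        have h3 : cokernel.π (kernel.ι φ) ≫ σ''.c = σ''.b ≫ R.g := σ''.comm₂
        rw [h3, hbeq]
  have colimE : IsColimit (CokernelCofork.ofπ E₀ wk) :=
    CokernelCofork.IsColimit.ofπ _ _
      (fun {R} ρ hρ => (descEx ρ hρ).choose)
      (fun {R} ρ hρ => (descEx ρ hρ).choose_spec.1)
      (fun {R} ρ hρ σ'' h'' => (descEx ρ hρ).choose_spec.2 σ'' h'')
  -- Mo₀ is a normal mono: it is a kernel of the canonical cokernel of itself
  have hwMoQ : Mo₀ ≫ cq Mo₀ = 0 := cq_w Mo₀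
  have hj'ker : IsKer Mo₀.b (cokernel.π Mo₀.b) :=
    isKer_of_coker hj'n (isCoker_cokernelπ Mo₀.b)
  have limEx : ∀ ⦃R : SES C⦄ (ρ : R ⟶ QT), ρ ≫ cq Mo₀ = 0 →
      ∃ σ : R ⟶ I₀, σ ≫ Mo₀ = ρ ∧ ∀ σ'' : R ⟶ I₀, σ'' ≫ Mo₀ = ρ → σ'' = σ := by
    intro R ρ hρ
    have hρb : ρ.b ≫ cokernel.π Mo₀.b = 0 := congrArg SES.Hom.b hρ
    obtain ⟨σb, hσb⟩ := hj'ker.lift ρ.b hρb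
    have hσb' : σb ≫ j' = ρ.b := hσb
    have hσa0 : (R.f ≫ σb) ≫ φ = 0 := by
      show (R.f ≫ σb) ≫ j' ≫ QT.g = 0
      rw [Category.assoc, ← Category.assoc σb j' QT.g, hσb', ← Category.assoc,
        ρ.comm₁, Category.assoc, QT.w, comp_zero]
    have hσaι : kernel.lift φ (R.f ≫ σb) hσa0 ≫ kernel.ι φ = R.f ≫ σb :=
      kernel.lift_ι _ _ _
    have hσc0 : R.f ≫ σb ≫ cokernel.π (kernel.ι φ) = 0 := by
      rw [← Category.assoc, ← hσaι, Category.assoc, cokernel.condition, comp_zero]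
    obtain ⟨σc, hσc⟩ := (ses_isCoker R).desc (σb ≫ cokernel.π (kernel.ι φ)) hσc0
    refine ⟨⟨kernel.lift φ (R.f ≫ σb) hσa0, σb, σc, hσaι.symm, hσc⟩, ?_, ?_⟩
    · apply SES.Hom.ext
      · refine hQTf.mono.right_cancellation _ _ ?_
        show (kernel.lift φ (R.f ≫ σb) hσa0 ≫ Ma) ≫ QT.f = ρ.a ≫ QT.f
        rw [Category.assoc, hMa, ← Category.assoc, hσaι, Category.assoc, hσb',
          ρ.comm₁]
      · exact hσb'
      · refine (ses_isCoker R).epi.left_cancellation _ _ ?_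
        show R.g ≫ σc ≫ Mc = R.g ≫ ρ.c
        rw [← Category.assoc, hσc, Category.assoc, hMc, hφdef, ← Category.assoc,
          hσb', ρ.comm₂]
    · intro σ'' h''
      have hb'' : σ''.b ≫ j' = ρ.b := congrArg SES.Hom.b h''
      have hbeq : σ''.b = σb :=
        hj'm.right_cancellation _ _ (by rw [hb'', hσb'])
      apply SES.Hom.ext
      · refine (isKer_kernelι φ).mono.right_cancellation _ _ ?_
        have h4 : σ''.a ≫ kernel.ι φ = R.f ≫ σ''.b := σ''.comm₁.symm
        rw [h4, hbeq]
        exact hσaι.symm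
      · exact hbeq
      · refine (ses_isCoker R).epi.left_cancellation _ _ ?_
        have h5 : R.g ≫ σ''.c = σ''.b ≫ cokernel.π (kernel.ι φ) := σ''.comm₂
        rw [h5, hbeq, hσc]
  have limM : IsLimit (KernelFork.ofι Mo₀ hwMoQ) :=
    KernelFork.IsLimit.ofι _ _
      (fun {R} ρ hρ => (limEx ρ hρ).choose)
      (fun {R} ρ hρ => (limEx ρ hρ).choose_spec.1)
      (fun {R} ρ hρ σ'' h'' => (limEx ρ hρ).choose_spec.2 σ'' h'')
  exact ⟨I₀, E₀, Mo₀, ⟨⟨_, kK, wk, colimE⟩⟩, ⟨⟨_, cq Mo₀, hwMoQ, limM⟩⟩, hEM⟩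

end Production

end St16
namespace St16

open CategoryTheory CategoryTheory.Limits

/-- One direction of Statement 16. -/
theorem oneDir {C : Type u} [Category.{v} C] [HasZeroObject C] [HasZeroMorphisms C]
    [HasKernels C] [HasCokernels C] (hdi : IsDiExact C)
    (S T U : SES C) (m : T ⟶ S) (μ : U ⟶ S)
    (hm : IsNormalMonoMap m) (hμ : IsNormalMonoMap μ)
    (QU QT : SES C) (cU : S ⟶ QU) (wU : μ ≫ cU = 0)
    (hQU : IsColimit (CokernelCofork.ofπ cU wU))
    (cT : S ⟶ QT) (wT : m ≫ cT = 0)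
    (hQT : IsColimit (CokernelCofork.ofπ cT wT))
    (h : IsNormalMap (m ≫ cU)) : IsNormalMap (μ ≫ cT) := by
  classical
  -- consumption of all the given ses-level structure
  obtain ⟨nm⟩ := hm
  obtain ⟨hmb, htX⟩ := ses_ker_consume nm.g m nm.w nm.isLimit
  obtain ⟨nμ⟩ := hμ
  obtain ⟨hvb, huX⟩ := ses_ker_consume nμ.g μ nμ.w nμ.isLimit
  obtain ⟨hcV, hpV⟩ := ses_coker_consume μ cU wU hQU
  obtain ⟨hcB, hpB⟩ := ses_coker_consume m cT wT hQT
  obtain ⟨I, E, Mo, hEne, hMonm, hcomp⟩ := h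
  obtain ⟨ne⟩ := hEne
  obtain ⟨hEb, hIg⟩ := ses_coker_consume ne.g E ne.w ne.isColimit
  obtain ⟨nmo⟩ := hMonm
  obtain ⟨hjker, hIf⟩ := ses_ker_consume nmo.g Mo nmo.w nmo.isLimit
  -- C-level data
  have hxg : IsKer S.f S.g := ses_isKer S
  have hgx : IsCoker S.g S.f := ses_isCoker S
  have hb : IsNormalMonoMap m.b := hmb.normalMono
  have hv : IsNormalMonoMap μ.b := hvb.normalMono
  have hej : E.b ≫ Mo.b = m.b ≫ cU.b := by
    have h0 := congrArg SES.Hom.b hcomp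
    rw [comp_b, comp_b] at h0; exact h0
  have hjn : IsNormalMonoMap Mo.b := hjker.normalMono
  have htBV : IsKer (kernel.ι (m.b ≫ cU.b)) (m.b ≫ cU.b) := isKer_kernelι _
  set tBV := kernel.ι (m.b ≫ cU.b) with htBVdef
  have hjm : Mono Mo.b := hjker.mono
  have htBVe : IsKer tBV E.b := by
    refine ⟨?_, htBV.mono, fun P t ht => htBV.lift t ?_⟩
    · refine hjm.right_cancellation _ _ ?_
      rw [Category.assoc, hej, zero_comp]
      exact htBV.w
    · rw [← hej, ← Category.assoc, ht, zero_comp]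
  have he : IsCoker E.b tBV := isCoker_of_ker hEb htBVe
  have cond₀ : ∀ ⦃P : C⦄ (t : P ⟶ I.Y), t ≫ Mo.b ≫ QU.g = 0 →
      ∀ ⦃E' : C⦄ (c : I.Y ⟶ E'), IsCoker c (T.f ≫ E.b) → t ≫ c = 0 := by
    intro P t ht E' c hc
    obtain ⟨s, hs⟩ := hIf.lift t ht
    obtain ⟨h', hh'⟩ := hIg.desc c hc.w
    rw [← hs, ← hh', ← Category.assoc, Category.assoc s, I.w, comp_zero, zero_comp]
  -- step 1
  have KL₁ := lemA hgx hcV htX htBV hej he hpV cond₀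
  have KL₂ : ∀ ⦃P : C⦄ (t : P ⟶ T.Y) ⦃Q' : C⦄ (q' : S.Y ⟶ Q'),
      IsCokerPair q' μ.b S.f → t ≫ m.b ≫ q' = 0 →
      ∀ ⦃E' : C⦄ (q : T.Y ⟶ E'), IsCokerPair q tBV T.f → t ≫ q = 0 :=
    fun P t Q' q' hq' ht E' q hq => KL₁ t q' hq'.symm ht q hq.symm
  -- step 2
  obtain ⟨M₁, eB, jB, hBej, hjBn, heB, condB⟩ :=
    lemB hdi hb hcV hgx htBV htX (isCoker_cokernelπ (μ.b ≫ S.g)) KL₂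
  -- step 3
  obtain ⟨M₂, eV, jV, hVej, hjVn, heV⟩ := fact hdi hv hgx.normalEpi huX
  have htVB : IsKer (kernel.ι (μ.b ≫ cT.b)) (μ.b ≫ cT.b) := isKer_kernelι _
  set tVB := kernel.ι (μ.b ≫ cT.b) with htVBdef
  have condV := lemC hdi hb hv hcV hcB htBV htVB (isCoker_cokernelπ (μ.b ≫ S.g))
    (isCoker_cokernelπ (m.b ≫ S.g)) hBej hjBn heB condB hVej hjVn heV
  -- step 4
  have KL₃ := lemA hcB hgx htVB huX hVej heV (isCoker_cokernelπ (m.b ≫ S.g)) condV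
  have KL₄ : ∀ ⦃P : C⦄ (t : P ⟶ U.Y) ⦃Q' : C⦄ (q' : S.Y ⟶ Q'),
      IsCokerPair q' S.f m.b → t ≫ μ.b ≫ q' = 0 →
      ∀ ⦃E' : C⦄ (q : U.Y ⟶ E'), IsCokerPair q U.f tVB → t ≫ q = 0 :=
    fun P t Q' q' hq' ht E' q hq => KL₃ t q' hq'.symm ht q hq.symm
  -- step 5
  obtain ⟨M', e', j', he'j', hj'n, hcoe', cond'⟩ :=
    lemB hdi hv hgx hcB huX htVB hpB KL₄
  -- step 6 : production
  exact production S U QT μ cT huX hpB he'j' hj'n hcoe' cond'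

end St16
/-- If `C` is a di-exact z-exact category, then dinversion preserves
normal maps in the category `SES C` of short exact sequences of `C`: for every object
`S` of `SES C`, all normal monomorphisms `m : T ↣ S` and `μ : U ↣ S`, and arbitrary
chosen cokernels `cU : S ↠ S/U` of `μ` and `cT : S ↠ S/T` of `m`, the composite
`m ≫ cU : T ⟶ S/U` is a normal morphism if and only if the composite
`μ ≫ cT : U ⟶ S/T` is a normal morphism. -/
theorem stmt16 {C : Type u} [Category.{v} C] [HasZeroObject C] [HasZeroMorphisms C]
    [HasKernels C] [HasCokernels C] (hdi : IsDiExact C) :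
    ∀ (S T U : SES C) (m : T ⟶ S) (μ : U ⟶ S),
      IsNormalMonoMap m → IsNormalMonoMap μ →
      ∀ (QU QT : SES C) (cU : S ⟶ QU) (wU : μ ≫ cU = 0)
        (_ : IsColimit (CokernelCofork.ofπ cU wU))
        (cT : S ⟶ QT) (wT : m ≫ cT = 0)
        (_ : IsColimit (CokernelCofork.ofπ cT wT)),
        (IsNormalMap (m ≫ cU) ↔ IsNormalMap (μ ≫ cT)) := by
  intro S T U m μ hm hμ QU QT cU wU hU cT wT hT
  exact ⟨fun h => St16.oneDir hdi S T U m μ hm hμ QU QT cU wU hU cT wT hT h,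
    fun h => St16.oneDir hdi S U T μ m hμ hm QT QU cT wT hT cU wU hU h⟩
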